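/- arXiv:2604.08580 — 2 statements merged into one kernel-verified Lean document; each statement's English description precedes it below -/
import Mathlib

section
/- Pathwise lean adjoint gradient identity: Let d be a positive integer and T > 0. Let b : ℝ^d × ℝ → ℝ^d and f : ℝ^d × ℝ → ℝ be continuously differentiable in their first (space) argument, let g : ℝ^d → ℝ be continuously differentiable, and let x : ℝ → ℝ^d be a continuous path such that t ↦ ∇_x b(x(t), t) and t ↦ ∇_x f(x(t), t) are continuous on [0,T]. Suppose ξ : ℝ → ℝ^d satisfies the tangent equation ξ'(t) = ∇_x b(x(t), t) · ξ(t) for all t ∈ [0,T] with ξ(0) = v, and a : ℝ → ℝ^d satisfies the lean adjoint equation a'(t) = −∇_x b(x(t), t)ᵀ · a(t) − ∇_x f(x(t), t) for all t ∈ [0,T] with terminal condition a(T) = ∇g(x(T)). Then ⟨a(0), v⟩ = ∫_0^T ⟨∇_x f(x(t), t), ξ(t)⟩ dt + ⟨∇g(x(T)), ξ(T)⟩. -/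
open scoped RealInnerProductSpace
open Set Matrix intervalIntegral

/-- Action of a real `d × d` matrix on a vector of `EuclideanSpace ℝ (Fin d)`
by matrix–vector multiplication. -/
def matVec {d : ℕ} (M : Matrix (Fin d) (Fin d) ℝ) (v : EuclideanSpace ℝ (Fin d)) :
    EuclideanSpace ℝ (Fin d) := WithLp.toLp 2 (M.mulVec v)

/-- The Jacobian matrix at `x` of a map `φ : ℝ^d → ℝ^d`. -/
noncomputable def jacobianMatrix {d : ℕ}
    (φ : EuclideanSpace ℝ (Fin d) → EuclideanSpace ℝ (Fin d))
    (x : EuclideanSpace ℝ (Fin d)) : Matrix (Fin d) (Fin d) ℝ :=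
  Matrix.toEuclideanLin.symm (fderiv ℝ φ x).toLinearMap


lemma inner_transpose_matVec {d : ℕ} (M : Matrix (Fin d) (Fin d) ℝ)
    (u w : EuclideanSpace ℝ (Fin d)) :
    ⟪matVec Mᵀ u, w⟫ = ⟪u, matVec M w⟫ := by
  simp only [matVec, PiLp.inner_apply, RCLike.inner_apply, conj_trivial, Matrix.mulVec,
    dotProduct, Matrix.transpose_apply, PiLp.toLp_apply]
  simp_rw [Finset.sum_mul, Finset.mul_sum]
  rw [Finset.sum_comm]
  congr 1; ext i; congr 1; ext j; ring

/-- **Pathwise lean adjoint gradient identity.**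

If `ξ` solves the tangent equation `ξ' = ∇ₓb(x(t),t) ξ` with `ξ 0 = v` and `a` solves the
lean adjoint equation `a' = -∇ₓb(x(t),t)ᵀ a - ∇ₓf(x(t),t)` with `a T = ∇g(x(T))`, then
`⟪a 0, v⟫ = ∫_0^T ⟪∇ₓf(x(t),t), ξ t⟫ dt + ⟪∇g(x(T)), ξ T⟫`. -/
theorem lean_adjoint_pathwise_gradient_identity
    (d : ℕ) (hd : 0 < d) (T : ℝ) (hT : 0 < T)
    (b : EuclideanSpace ℝ (Fin d) → ℝ → EuclideanSpace ℝ (Fin d))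
    (f : EuclideanSpace ℝ (Fin d) → ℝ → ℝ)
    (g : EuclideanSpace ℝ (Fin d) → ℝ)
    (x : ℝ → EuclideanSpace ℝ (Fin d))
    (v : EuclideanSpace ℝ (Fin d))
    (ξ a : ℝ → EuclideanSpace ℝ (Fin d))
    (hb : ∀ t : ℝ, ContDiff ℝ 1 (fun y => b y t))
    (hf : ∀ t : ℝ, ContDiff ℝ 1 (fun y => f y t))
    (hg : ContDiff ℝ 1 g)
    (hx : ContinuousOn x (Icc 0 T))
    (hJbCont : ∀ i j, ContinuousOn
      (fun t => jacobianMatrix (fun y => b y t) (x t) i j) (Icc 0 T))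
    (hgfCont : ContinuousOn
      (fun t => gradient (fun y => f y t) (x t)) (Icc 0 T))
    (hξ : ∀ t ∈ Icc (0 : ℝ) T,
      HasDerivAt ξ (matVec (jacobianMatrix (fun y => b y t) (x t)) (ξ t)) t)
    (hξ0 : ξ 0 = v)
    (ha : ∀ t ∈ Icc (0 : ℝ) T,
      HasDerivAt a (-matVec (jacobianMatrix (fun y => b y t) (x t))ᵀ (a t)
        - gradient (fun y => f y t) (x t)) t)
    (haT : a T = gradient g (x T)) :
    ⟪a 0, v⟫ = (∫ t in (0 : ℝ)..T, ⟪gradient (fun y => f y t) (x t), ξ t⟫)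
      + ⟪gradient g (x T), ξ T⟫ := by
  set F : ℝ → ℝ := fun t => ⟪a t, ξ t⟫ with hF
  have hξc : ContinuousOn ξ (Icc 0 T) := fun t ht => (hξ t ht).continuousAt.continuousWithinAt
  have hDeriv : ∀ t ∈ Icc (0 : ℝ) T,
      HasDerivAt F (-⟪gradient (fun y => f y t) (x t), ξ t⟫) t := by
    intro t ht
    have h := (ha t ht).inner ℝ (hξ t ht)
    have key : ⟪a t, matVec (jacobianMatrix (fun y => b y t) (x t)) (ξ t)⟫
        + ⟪(-matVec (jacobianMatrix (fun y => b y t) (x t))ᵀ (a t)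
            - gradient (fun y => f y t) (x t)), ξ t⟫
        = -⟪gradient (fun y => f y t) (x t), ξ t⟫ := by
      rw [inner_sub_left, inner_neg_left, inner_transpose_matVec]
      ring
    rw [key] at h
    exact h
  have hIntCont : ContinuousOn
      (fun t => -⟪gradient (fun y => f y t) (x t), ξ t⟫) (Icc 0 T) :=
    (hgfCont.inner hξc).neg
  have hint : IntervalIntegrable
      (fun t => -⟪gradient (fun y => f y t) (x t), ξ t⟫) MeasureTheory.volume 0 T := by
    apply ContinuousOn.intervalIntegrable
    rwa [uIcc_of_le hT.le]
  have hFTC := intervalIntegral.integral_eq_sub_of_hasDerivAt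
    (fun t ht => hDeriv t (by rwa [uIcc_of_le hT.le] at ht)) hint
  rw [intervalIntegral.integral_neg] at hFTC
  have hint2 : IntervalIntegrable
      (fun t => ⟪gradient (fun y => f y t) (x t), ξ t⟫) MeasureTheory.volume 0 T := by
    apply ContinuousOn.intervalIntegrable
    rw [uIcc_of_le hT.le]; exact hgfCont.inner hξc
  have : F 0 = (∫ t in (0 : ℝ)..T, ⟪gradient (fun y => f y t) (x t), ξ t⟫) + F T := by
    linarith [hFTC]
  simpa [hF, hξ0, haT] using this
end

section
/- Pathwise second-order Hessian-bilinear adjoint identity (deterministic/pathwise core of the second-order adjoint lemma with purely time-dependent diffusion): Let d be a positive integer, T > 0, and v, w ∈ ℝ^d. Let b : ℝ^d × ℝ → ℝ^d and f : ℝ^d × ℝ → ℝ be twice continuously differentiable in the space variable, g : ℝ^d → ℝ twice continuously differentiable, and x : ℝ → ℝ^d a continuous path such that all the composed coefficient maps below are continuous on [0,T]. Suppose that on [0,T]: (i) ξᵛ'(t) = ∇_x b(x(t),t) · ξᵛ(t) with ξᵛ(0) = v, and ξʷ'(t) = ∇_x b(x(t),t) · ξʷ(t) with ξʷ(0) = w;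 (ii) ζ'(t) = ∇_x b(x(t),t) · ζ(t) + ∇²_x b(x(t),t)[ξᵛ(t), ξʷ(t)] with ζ(0) = 0; (iii) a'(t) = −∇_x b(x(t),t)ᵀ · a(t) − ∇_x f(x(t),t) with a(T) = ∇g(x(T)); (iv) A'(t) = −( ∇_x b(x(t),t)ᵀ · A(t) + A(t) · ∇_x b(x(t),t) + ∇²_x f(x(t),t) + Σ_{i=1}^d a_i(t) · ∇²_x b_i(x(t),t) ) with A(T) = ∇²g(x(T)). Then ∫_0^T ( ⟨∇²_x f(x(t),t) · ξᵛ(t), ξʷ(t)⟩ + ⟨∇_x f(x(t),t), ζ(t)⟩ ) dt + ⟨∇²g(x(T)) · ξᵛ(T), ξʷ(T)⟩ + ⟨∇g(x(T)), ζ(T)⟩ = ⟨v, A(0) · w⟩. -/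
open scoped RealInnerProductSpace
open Set Matrix intervalIntegral

attribute [local instance] Matrix.normedAddCommGroup Matrix.normedSpace

/-- Reinterpret a plain vector `Fin d → ℝ` as an element of `EuclideanSpace ℝ (Fin d)`. -/
def toEuc {d : ℕ} (v : Fin d → ℝ) : EuclideanSpace ℝ (Fin d) := WithLp.toLp 2 v

/-- The Hessian matrix at `x` of a scalar map `φ : ℝ^d → ℝ` (the Jacobian of its
gradient). -/
noncomputable def hessianMatrix {d : ℕ}
    (φ : EuclideanSpace ℝ (Fin d) → ℝ)
    (x : EuclideanSpace ℝ (Fin d)) : Matrix (Fin d) (Fin d) ℝ :=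
  Matrix.toEuclideanLin.symm (fderiv ℝ (gradient φ) x).toLinearMap

section Aux
variable {d : ℕ}

local notation "Euc" => EuclideanSpace ℝ (Fin d)

lemma matVec_toEucSymm (L : Euc →ₗ[ℝ] Euc) (v : Euc) :
    matVec (Matrix.toEuclideanLin.symm L) v = L v := by
  conv_rhs => rw [← Matrix.toEuclideanLin.apply_symm_apply L]
  rfl

lemma matVec_jacobian (φ : Euc → Euc) (x v : Euc) :
    matVec (jacobianMatrix φ x) v = fderiv ℝ φ x v :=
  matVec_toEucSymm _ v

lemma matVec_hessian (φ : Euc → ℝ) (x v : Euc) :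
    matVec (hessianMatrix φ x) v = fderiv ℝ (gradient φ) x v :=
  matVec_toEucSymm _ v

lemma inner_eq_sum (u v : Euc) : ⟪u, v⟫ = ∑ i, u i * v i := by
  simp [PiLp.inner_apply, RCLike.inner_apply, conj_trivial]
  exact Finset.sum_congr rfl fun i _ => mul_comm _ _

lemma matVec_apply (M : Matrix (Fin d) (Fin d) ℝ) (v : Euc) (i : Fin d) :
    matVec M v i = ∑ j, M i j * v j := by
  simp [matVec, Matrix.mulVec, dotProduct]

lemma inner_matVec_transpose (M : Matrix (Fin d) (Fin d) ℝ) (u w : Euc) :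
    ⟪matVec Mᵀ u, w⟫ = ⟪u, matVec M w⟫ := by
  simp only [inner_eq_sum, matVec_apply, Matrix.transpose_apply, Finset.sum_mul,
    Finset.mul_sum]
  rw [Finset.sum_comm]
  exact Finset.sum_congr rfl fun i _ => Finset.sum_congr rfl fun j _ => by ring

lemma inner_matVec_transpose' (M : Matrix (Fin d) (Fin d) ℝ) (u w : Euc) :
    ⟪u, matVec Mᵀ w⟫ = ⟪matVec M u, w⟫ := by
  rw [real_inner_comm, inner_matVec_transpose, real_inner_comm]

lemma matVec_add (M N : Matrix (Fin d) (Fin d) ℝ) (v : Euc) :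
    matVec (M + N) v = matVec M v + matVec N v := by
  show WithLp.toLp 2 ((M + N).mulVec (WithLp.ofLp v)) = _
  rw [Matrix.add_mulVec]; rfl

lemma matVec_neg (M : Matrix (Fin d) (Fin d) ℝ) (v : Euc) :
    matVec (-M) v = -matVec M v := by
  show WithLp.toLp 2 ((-M).mulVec (WithLp.ofLp v)) = _
  rw [Matrix.neg_mulVec]; rfl

lemma matVec_mulMat (M N : Matrix (Fin d) (Fin d) ℝ) (v : Euc) :
    matVec (M * N) v = matVec M (matVec N v) := by
  show WithLp.toLp 2 ((M * N).mulVec (WithLp.ofLp v)) = WithLp.toLp 2 (M.mulVec (N.mulVec (WithLp.ofLp v)))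
  rw [Matrix.mulVec_mulVec]

lemma matVec_smul (c : ℝ) (M : Matrix (Fin d) (Fin d) ℝ) (v : Euc) :
    matVec (c • M) v = c • matVec M v := by
  show WithLp.toLp 2 ((c • M).mulVec (WithLp.ofLp v)) = _
  rw [Matrix.smul_mulVec]; rfl

lemma matVec_sum {ι : Type*} (s : Finset ι) (M : ι → Matrix (Fin d) (Fin d) ℝ) (v : Euc) :
    matVec (∑ i ∈ s, M i) v = ∑ i ∈ s, matVec (M i) v := by
  classical
  induction s using Finset.induction_on with
  | empty => show WithLp.toLp 2 (Matrix.mulVec 0 (WithLp.ofLp v)) = 0; simp [Matrix.zero_mulVec]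
  | insert _ _ h ih => rw [Finset.sum_insert h, Finset.sum_insert h, matVec_add, ih]

lemma inner_toEuc (u : Euc) (h : Fin d → ℝ) : ⟪u, toEuc h⟫ = ∑ i, u i * h i := by
  simp [inner_eq_sum, toEuc]

end Aux

section Hess
variable {d : ℕ}
local notation "Euc" => EuclideanSpace ℝ (Fin d)

lemma matrix_entry_eq (M : Matrix (Fin d) (Fin d) ℝ) (i j : Fin d) :
    M i j = matVec M (EuclideanSpace.single j 1) i := by
  simp [matVec_apply, EuclideanSpace.single_apply]

lemma gradient_apply_inner (φ : Euc → ℝ) (y v : Euc) :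
    ⟪gradient φ y, v⟫ = fderiv ℝ φ y v := by
  rw [show gradient φ y = (InnerProductSpace.toDual ℝ Euc).symm (fderiv ℝ φ y) from rfl,
    InnerProductSpace.toDual_symm_apply]

lemma gradient_comp (φ : Euc → ℝ) (y : Euc) (i : Fin d) :
    gradient φ y i = fderiv ℝ φ y (EuclideanSpace.single i 1) := by
  rw [← gradient_apply_inner]
  rw [EuclideanSpace.inner_single_right]
  simp

lemma differentiable_gradient {φ : Euc → ℝ} (hφ : ContDiff ℝ 2 φ) :
    Differentiable ℝ (gradient φ) := by
  have hdf : Differentiable ℝ (fderiv ℝ φ) :=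
    (hφ.fderiv_right (m := 1) (by norm_num)).differentiable one_ne_zero
  have : gradient φ = fun y =>
      (InnerProductSpace.toDual ℝ Euc).symm.toContinuousLinearEquiv (fderiv ℝ φ y) := rfl
  rw [this]
  exact ((InnerProductSpace.toDual ℝ Euc).symm.toContinuousLinearEquiv.differentiable).comp hdf

lemma hessianMatrix_entry {φ : Euc → ℝ} (hφ : ContDiff ℝ 2 φ) (x : Euc) (i j : Fin d) :
    hessianMatrix φ x i j
      = fderiv ℝ (fderiv ℝ φ) x (EuclideanSpace.single j 1) (EuclideanSpace.single i 1) := by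
  have hdf : Differentiable ℝ (fderiv ℝ φ) :=
    (hφ.fderiv_right (m := 1) (by norm_num)).differentiable one_ne_zero
  have hdg : Differentiable ℝ (gradient φ) := differentiable_gradient hφ
  rw [matrix_entry_eq (hessianMatrix φ x) i j, matVec_hessian]
  have e1 : fderiv ℝ (gradient φ) x (EuclideanSpace.single j 1) i
      = fderiv ℝ (fun y => gradient φ y i) x (EuclideanSpace.single j 1) := by
    have : (fun y => gradient φ y i) = (PiLp.proj 2 (fun _ : Fin d => ℝ) i : Euc →L[ℝ] ℝ) ∘ (gradient φ) := rfl
    rw [this, fderiv_comp x (PiLp.proj 2 (fun _ : Fin d => ℝ) i : Euc →L[ℝ] ℝ).differentiableAt (hdg x),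
      ContinuousLinearMap.fderiv]
    rfl
  rw [e1]
  have e2 : (fun y => gradient φ y i)
      = (ContinuousLinearMap.apply ℝ ℝ (EuclideanSpace.single i 1)) ∘ (fderiv ℝ φ) := by
    funext y; exact gradient_comp φ y i
  rw [e2, fderiv_comp x (ContinuousLinearMap.apply ℝ ℝ _).differentiableAt (hdf x),
    ContinuousLinearMap.fderiv]
  rfl

lemma hessianMatrix_symm {φ : Euc → ℝ} (hφ : ContDiff ℝ 2 φ) (x : Euc) :
    (hessianMatrix φ x)ᵀ = hessianMatrix φ x := by
  ext i j
  rw [Matrix.transpose_apply, hessianMatrix_entry hφ, hessianMatrix_entry hφ]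
  exact (hφ.contDiffAt.isSymmSndFDerivAt (by norm_num)) _ _

end Hess

section Deriv
variable {d : ℕ}
local notation "Euc" => EuclideanSpace ℝ (Fin d)

lemma hasDerivAt_euc_of_components {f : ℝ → Euc} {f' : Euc} {t : ℝ}
    (h : ∀ i, HasDerivAt (fun s => f s i) (f' i) t) : HasDerivAt f f' t := by
  have h1 : HasDerivAt (fun s => (fun i => f s i : Fin d → ℝ)) (fun i => f' i) t :=
    hasDerivAt_pi.mpr h
  have h2 := ((PiLp.continuousLinearEquiv 2 ℝ (fun _ : Fin d => ℝ)).symm.toContinuousLinearMap.hasFDerivAt).comp_hasDerivAt t h1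
  exact h2

lemma hasDerivAt_component {f : ℝ → Euc} {f' : Euc} {t : ℝ} (h : HasDerivAt f f' t)
    (i : Fin d) : HasDerivAt (fun s => f s i) (f' i) t :=
  ((PiLp.proj 2 (fun _ : Fin d => ℝ) i : Euc →L[ℝ] ℝ).hasFDerivAt).comp_hasDerivAt t h

lemma hasDerivAt_matrix_entry {A : ℝ → Matrix (Fin d) (Fin d) ℝ}
    {A' : Matrix (Fin d) (Fin d) ℝ} {t : ℝ} (h : HasDerivAt A A' t) (i j : Fin d) :
    HasDerivAt (fun s => A s i j) (A' i j) t := by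
  have h1 : HasDerivAt (fun s => (A s : Fin d → Fin d → ℝ)) A' t := h
  exact hasDerivAt_pi.mp ((hasDerivAt_pi.mp h1) i) j

lemma HasDerivAt.matVec' {A : ℝ → Matrix (Fin d) (Fin d) ℝ}
    {A' : Matrix (Fin d) (Fin d) ℝ} {u : ℝ → Euc} {u' : Euc} {t : ℝ}
    (hA : HasDerivAt A A' t) (hu : HasDerivAt u u' t) :
    HasDerivAt (fun s => matVec (A s) (u s)) (matVec A' (u t) + matVec (A t) u') t := by
  apply hasDerivAt_euc_of_components
  intro i
  have h : HasDerivAt (fun s => ∑ j, A s i j * u s j)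
      (∑ j, (A' i j * u t j + A t i j * u' j)) t :=
    HasDerivAt.fun_sum fun j _ =>
      (hasDerivAt_matrix_entry hA i j).mul (hasDerivAt_component hu j)
  have e1 : (fun s => matVec (A s) (u s) i) = fun s => ∑ j, A s i j * u s j := by
    funext s; rw [matVec_apply]
  have e2 : (matVec A' (u t) + matVec (A t) u') i
      = ∑ j, (A' i j * u t j + A t i j * u' j) := by
    have : (matVec A' (u t) + matVec (A t) u') i = matVec A' (u t) i + matVec (A t) u' i := rfl
    rw [this, matVec_apply, matVec_apply, ← Finset.sum_add_distrib]
  rw [e1, e2]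
  exact h

end Deriv

/-- **Pathwise second-order Hessian-bilinear adjoint identity** (deterministic/pathwise
core of the second-order adjoint lemma with purely time-dependent diffusion).

With first tangents `ξv, ξw`, second tangent `ζ`, first-order adjoint `a` and
second-order adjoint `A` along a path `x`, one has
`∫_0^T (⟪∇²ₓf ξv, ξw⟫ + ⟪∇ₓf, ζ⟫) dt + ⟪∇²g(x T) ξv(T), ξw(T)⟫ + ⟪∇g(x T), ζ(T)⟫
  = ⟪v, A 0 · w⟫`. -/
theorem second_order_hessian_bilinear_adjoint_identity
    (d : ℕ) (hd : 0 < d) (T : ℝ) (hT : 0 < T)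
    (v w : EuclideanSpace ℝ (Fin d))
    (b : EuclideanSpace ℝ (Fin d) → ℝ → EuclideanSpace ℝ (Fin d))
    (f : EuclideanSpace ℝ (Fin d) → ℝ → ℝ)
    (g : EuclideanSpace ℝ (Fin d) → ℝ)
    (x : ℝ → EuclideanSpace ℝ (Fin d))
    (ξv ξw ζ a : ℝ → EuclideanSpace ℝ (Fin d))
    (A : ℝ → Matrix (Fin d) (Fin d) ℝ)
    (hb : ∀ t : ℝ, ContDiff ℝ 2 (fun y => b y t))
    (hf : ∀ t : ℝ, ContDiff ℝ 2 (fun y => f y t))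
    (hg : ContDiff ℝ 2 g)
    (hx : ContinuousOn x (Icc 0 T))
    (hJbCont : ∀ i j, ContinuousOn
      (fun t => jacobianMatrix (fun y => b y t) (x t) i j) (Icc 0 T))
    (hHbCont : ∀ (i : Fin d) (k l : Fin d), ContinuousOn
      (fun t => hessianMatrix (fun y => b y t i) (x t) k l) (Icc 0 T))
    (hgfCont : ContinuousOn
      (fun t => gradient (fun y => f y t) (x t)) (Icc 0 T))
    (hHfCont : ∀ k l, ContinuousOn
      (fun t => hessianMatrix (fun y => f y t) (x t) k l) (Icc 0 T))
    -- (i) first-order tangent equations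
    (hξv : ∀ t ∈ Icc (0 : ℝ) T,
      HasDerivAt ξv (matVec (jacobianMatrix (fun y => b y t) (x t)) (ξv t)) t)
    (hξv0 : ξv 0 = v)
    (hξw : ∀ t ∈ Icc (0 : ℝ) T,
      HasDerivAt ξw (matVec (jacobianMatrix (fun y => b y t) (x t)) (ξw t)) t)
    (hξw0 : ξw 0 = w)
    -- (ii) second tangent equation
    (hζ : ∀ t ∈ Icc (0 : ℝ) T,
      HasDerivAt ζ (matVec (jacobianMatrix (fun y => b y t) (x t)) (ζ t)
        + toEuc (fun i =>
            ⟪ξv t, matVec (hessianMatrix (fun y => b y t i) (x t)) (ξw t)⟫)) t)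
    (hζ0 : ζ 0 = 0)
    -- (iii) first-order adjoint equation
    (ha : ∀ t ∈ Icc (0 : ℝ) T,
      HasDerivAt a (-matVec (jacobianMatrix (fun y => b y t) (x t))ᵀ (a t)
        - gradient (fun y => f y t) (x t)) t)
    (haT : a T = gradient g (x T))
    -- (iv) second-order adjoint matrix equation
    (hA : ∀ t ∈ Icc (0 : ℝ) T,
      HasDerivAt A (-((jacobianMatrix (fun y => b y t) (x t))ᵀ * A t
        + A t * jacobianMatrix (fun y => b y t) (x t)
        + hessianMatrix (fun y => f y t) (x t)
        + ∑ i : Fin d, a t i • hessianMatrix (fun y => b y t i) (x t))) t)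
    (hAT : A T = hessianMatrix g (x T)) :
    (∫ t in (0 : ℝ)..T,
        (⟪matVec (hessianMatrix (fun y => f y t) (x t)) (ξv t), ξw t⟫
          + ⟪gradient (fun y => f y t) (x t), ζ t⟫))
      + ⟪matVec (hessianMatrix g (x T)) (ξv T), ξw T⟫
      + ⟪gradient g (x T), ζ T⟫
      = ⟪v, matVec (A 0) w⟫ := by
  set Φ : ℝ → ℝ := fun t => ⟪ξv t, matVec (A t) (ξw t)⟫ + ⟪a t, ζ t⟫ with hΦdef
  set F : ℝ → ℝ := fun t =>
    ⟪matVec (hessianMatrix (fun y => f y t) (x t)) (ξv t), ξw t⟫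
      + ⟪gradient (fun y => f y t) (x t), ζ t⟫ with hFdef
  -- symmetry of the Hessian of f along the path
  have hHfsymm : ∀ t, ⟪matVec (hessianMatrix (fun y => f y t) (x t)) (ξv t), ξw t⟫
      = ⟪ξv t, matVec (hessianMatrix (fun y => f y t) (x t)) (ξw t)⟫ := by
    intro t
    conv_lhs => rw [← hessianMatrix_symm (hf t) (x t)]
    rw [inner_matVec_transpose]
  -- the derivative of Φ
  have hΦ : ∀ t ∈ Icc (0 : ℝ) T, HasDerivAt Φ (-F t) t := by
    intro t ht
    have h1 := (hA t ht).matVec' (hξw t ht)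
    have h2 := HasDerivAt.inner ℝ (hξv t ht) h1
    have h3 := HasDerivAt.inner ℝ (ha t ht) (hζ t ht)
    have h4 : HasDerivAt Φ _ t := h2.add h3
    convert h4 using 1
    set J := jacobianMatrix (fun y => b y t) (x t)
    set Hf := hessianMatrix (fun y => f y t) (x t)
    have hS : matVec (∑ i : Fin d, a t i • hessianMatrix (fun y => b y t i) (x t)) (ξw t)
        = ∑ i : Fin d, a t i • matVec (hessianMatrix (fun y => b y t i) (x t)) (ξw t) := by
      rw [matVec_sum]
      exact Finset.sum_congr rfl fun i _ => matVec_smul _ _ _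
    simp only [hFdef, neg_add_rev, matVec_neg, matVec_add, matVec_mulMat, hS,
      inner_add_right, inner_neg_right, inner_sub_left, inner_neg_left, inner_add_left,
      inner_sum, real_inner_smul_right, inner_toEuc]
    rw [hHfsymm t]
    rw [inner_matVec_transpose' J (ξv t) (matVec (A t) (ξw t)),
      inner_matVec_transpose J (a t) (ζ t)]
    ring
  -- continuity of the integrand
  have hξvC : ContinuousOn ξv (Icc 0 T) := fun s hs => (hξv s hs).continuousAt.continuousWithinAt
  have hξwC : ContinuousOn ξw (Icc 0 T) := fun s hs => (hξw s hs).continuousAt.continuousWithinAt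
  have hζC : ContinuousOn ζ (Icc 0 T) := fun s hs => (hζ s hs).continuousAt.continuousWithinAt
  have hcomp : ∀ (u : ℝ → EuclideanSpace ℝ (Fin d)), ContinuousOn u (Icc 0 T) →
      ∀ j : Fin d, ContinuousOn (fun s => u s j) (Icc 0 T) := by
    intro u hu j
    exact (PiLp.proj 2 (fun _ : Fin d => ℝ) j :
      EuclideanSpace ℝ (Fin d) →L[ℝ] ℝ).continuous.comp_continuousOn hu
  have hFC : ContinuousOn F (Icc 0 T) := by
    apply ContinuousOn.add
    · have : (fun t => (⟪matVec (hessianMatrix (fun y => f y t) (x t)) (ξv t), ξw t⟫ : ℝ))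
          = fun t => ∑ i, (∑ j, hessianMatrix (fun y => f y t) (x t) i j * ξv t j) * ξw t i := by
        funext t
        rw [inner_eq_sum]
        exact Finset.sum_congr rfl fun i _ => by rw [matVec_apply]
      rw [this]
      apply continuousOn_finset_sum
      intro i _
      apply ContinuousOn.mul _ (hcomp _ hξwC i)
      apply continuousOn_finset_sum
      intro j _
      exact (hHfCont i j).mul (hcomp _ hξvC j)
    · exact hgfCont.inner hζC
  have hInt : IntervalIntegrable (fun t => -F t) MeasureTheory.volume 0 T := by
    apply ContinuousOn.intervalIntegrable
    rw [uIcc_of_le hT.le]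
    exact hFC.neg
  have hFTC : ∫ t in (0:ℝ)..T, -F t = Φ T - Φ 0 := by
    apply intervalIntegral.integral_eq_sub_of_hasDerivAt
    · intro t ht
      rw [uIcc_of_le hT.le] at ht
      exact hΦ t ht
    · exact hInt
  rw [intervalIntegral.integral_neg] at hFTC
  have hI : ∫ t in (0:ℝ)..T, F t = Φ 0 - Φ T := by linarith
  have hΦ0 : Φ 0 = ⟪v, matVec (A 0) w⟫ := by
    simp only [hΦdef, hξv0, hξw0, hζ0, inner_zero_right, add_zero]
  have hΦT : Φ T = ⟪matVec (hessianMatrix g (x T)) (ξv T), ξw T⟫ + ⟪gradient g (x T), ζ T⟫ := by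
    simp only [hΦdef, haT, hAT]
    congr 1
    conv_rhs => rw [← hessianMatrix_symm hg (x T)]
    rw [inner_matVec_transpose]
  have hgoal : (∫ t in (0:ℝ)..T,
        (⟪matVec (hessianMatrix (fun y => f y t) (x t)) (ξv t), ξw t⟫
          + ⟪gradient (fun y => f y t) (x t), ζ t⟫)) = ∫ t in (0:ℝ)..T, F t := rfl
  rw [hgoal, hI, hΦ0, hΦT]
  ring
end
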